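/- arXiv:1807.11825 — 6 statements merged into one kernel-verified Lean document; each statement's English description precedes it below -/
import Mathlib

section
/- Consider the semi-discrete finite volume scheme Ω_{i,j} d q_{i,j}/dt = −[F̂_{i+1/2,j} A_{i+1/2,j} − F̂_{i−1/2,j} A_{i−1/2,j} + Ĝ_{i,j+1/2} A_{i,j+1/2} − Ĝ_{i,j−1/2} A_{i,j−1/2}] + S_{i,j} on a two-dimensional structured curvilinear mesh, where the interface values fed into the numerical fluxes are obtained by applying any reconstruction procedure that is exact on constant data to the hydrostatic variables w = (ρ/α, u, v, p/β) and transforming back with the face-point values of α and β, and where the numerical fluxes F̂, Ĝ are any functions consistent with the Euler normal flux. If the initial cell data satisfy u_{i,j} = v_{i,j} = 0, ρ_{i,j}/α_{i,j} = ρ₀ (a constant) and p_{i,j}/β_{i,j} = p₀ (a constant) for all cells (i,j), then for every cell the flux terms exactly cancel the discretized source term S_{i,j}, so that d q_{i,j}/dt = 0 for all (i,j); i.e., the scheme is well-balanced and preserves this discrete hydrostatic state exactly. -/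
/-- A primitive gas state `(ρ, u, v, p)`. -/
abbrev GasState : Type := ℝ × ℝ × ℝ × ℝ

/-- The Euler normal flux `F(q, n) = (ρ u_n, p n₁ + ρ u u_n, p n₂ + ρ v u_n, (E+p) u_n)`
with `u_n = u n₁ + v n₂`, for a given total-energy function `E = E(ρ,u,v,p)`. -/
def eulerFlux (E : GasState → ℝ) (q : GasState) (n : ℝ × ℝ) : ℝ × ℝ × ℝ × ℝ :=
  (q.1 * (q.2.1 * n.1 + q.2.2.1 * n.2),
   q.2.2.2 * n.1 + q.1 * q.2.1 * (q.2.1 * n.1 + q.2.2.1 * n.2),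
   q.2.2.2 * n.2 + q.1 * q.2.2.1 * (q.2.1 * n.1 + q.2.2.1 * n.2),
   (E q + q.2.2.2) * (q.2.1 * n.1 + q.2.2.1 * n.2))

/-- **Well-balanced property of the α-β finite volume scheme on curvilinear meshes.**

The mesh corners are `(X i j, Y i j) = (x_{i+1/2,j+1/2}, y_{i+1/2,j+1/2})`; `Ax i j`,
`Ay i j` are the lengths of the faces `(i+1/2, j)` and `(i, j+1/2)` (assumed nonzero)
with unit normals `ℓ i j` and `m i j`; `α, β` are positive functions on ℝ², evaluated
at the cell centers `P i j` and at the face midpoints `Mx i j`, `My i j`; `Fhat`,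
`Ghat` are any numerical fluxes consistent with the Euler normal flux for the
total-energy function `E`; `RxL, RxR, RyL, RyR` form any reconstruction procedure that
is exact on constant data, applied to the hydrostatic variables
`w = (ρ/α, u, v, p/β)` and transformed back with the face-midpoint values of `α, β`;
`S i j` is the discretized gravitational source term, and `qdot i j` is the
semi-discrete time derivative defined by the scheme
`Ω_{ij} (d/dt) q_{ij} = -(flux differences) + S_{ij}`.

If the initial cell data satisfy `u = v = 0`, `ρ/α = ρ₀` and `p/β = p₀` with constants
`ρ₀, p₀ > 0`, then in every cell the flux terms exactly cancel the source term and
`(d/dt) q_{ij} = 0`: the scheme preserves the discrete hydrostatic state exactly. -/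
theorem alpha_beta_scheme_well_balanced
    -- mesh corners
    (X Y : ℤ → ℤ → ℝ)
    -- face lengths (nonzero) and unit normals
    (Ax Ay : ℤ → ℤ → ℝ) (ℓ m : ℤ → ℤ → ℝ × ℝ)
    (hAx : ∀ i j, Ax i j = Real.sqrt ((X i (j-1) - X i j)^2 + (Y i (j-1) - Y i j)^2))
    (hAy : ∀ i j, Ay i j = Real.sqrt ((X i j - X (i-1) j)^2 + (Y i j - Y (i-1) j)^2))
    (hAx0 : ∀ i j, Ax i j ≠ 0) (hAy0 : ∀ i j, Ay i j ≠ 0)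
    (hℓ : ∀ i j, ℓ i j = ((Y i j - Y i (j-1)) / Ax i j, -(X i j - X i (j-1)) / Ax i j))
    (hm : ∀ i j, m i j = (-(Y i j - Y (i-1) j) / Ay i j, (X i j - X (i-1) j) / Ay i j))
    -- cell areas
    (Ωc : ℤ → ℤ → ℝ) (hΩc : ∀ i j, 0 < Ωc i j)
    -- positive functions α, β; cell centers and face midpoints
    (α β : ℝ × ℝ → ℝ) (hα : ∀ z, 0 < α z) (hβ : ∀ z, 0 < β z)
    (P Mx My : ℤ → ℤ → ℝ × ℝ)
    (hMx : ∀ i j, Mx i j = ((X i (j-1) + X i j) / 2, (Y i (j-1) + Y i j) / 2))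
    (hMy : ∀ i j, My i j = ((X (i-1) j + X i j) / 2, (Y (i-1) j + Y i j) / 2))
    -- total-energy function and consistent numerical fluxes
    (E : GasState → ℝ)
    (Fhat Ghat : GasState → GasState → (ℝ × ℝ) → ℝ × ℝ × ℝ × ℝ)
    (hFcons : ∀ (q : GasState) (n : ℝ × ℝ), n.1^2 + n.2^2 = 1 → Fhat q q n = eulerFlux E q n)
    (hGcons : ∀ (q : GasState) (n : ℝ × ℝ), n.1^2 + n.2^2 = 1 → Ghat q q n = eulerFlux E q n)
    -- any reconstruction procedure that is exact on constant data
    (RxL RxR RyL RyR : (ℤ → ℤ → GasState) → ℤ → ℤ → GasState)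
    (hRxL : ∀ c : GasState, RxL (fun _ _ => c) = fun _ _ => c)
    (hRxR : ∀ c : GasState, RxR (fun _ _ => c) = fun _ _ => c)
    (hRyL : ∀ c : GasState, RyL (fun _ _ => c) = fun _ _ => c)
    (hRyR : ∀ c : GasState, RyR (fun _ _ => c) = fun _ _ => c)
    -- cell data and hydrostatic variables w = (ρ/α, u, v, p/β)
    (ρc uc vc pc : ℤ → ℤ → ℝ)
    (w : ℤ → ℤ → GasState)
    (hw : ∀ i j, w i j = (ρc i j / α (P i j), uc i j, vc i j, pc i j / β (P i j)))
    -- reconstructed primitive states at the faces, transformed back with α, β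
    (qxL qxR qyL qyR : ℤ → ℤ → GasState)
    (hqxL : ∀ i j, qxL i j = ((RxL w i j).1 * α (Mx i j), (RxL w i j).2.1,
      (RxL w i j).2.2.1, (RxL w i j).2.2.2 * β (Mx i j)))
    (hqxR : ∀ i j, qxR i j = ((RxR w i j).1 * α (Mx i j), (RxR w i j).2.1,
      (RxR w i j).2.2.1, (RxR w i j).2.2.2 * β (Mx i j)))
    (hqyL : ∀ i j, qyL i j = ((RyL w i j).1 * α (My i j), (RyL w i j).2.1,
      (RyL w i j).2.2.1, (RyL w i j).2.2.2 * β (My i j)))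
    (hqyR : ∀ i j, qyR i j = ((RyR w i j).1 * α (My i j), (RyR w i j).2.1,
      (RyR w i j).2.2.1, (RyR w i j).2.2.2 * β (My i j)))
    -- hydrostatic initial data
    (ρ₀ p₀ : ℝ) (hρ₀ : 0 < ρ₀) (hp₀ : 0 < p₀)
    (hu : ∀ i j, uc i j = 0) (hv : ∀ i j, vc i j = 0)
    (hρ : ∀ i j, ρc i j / α (P i j) = ρ₀)
    (hp : ∀ i j, pc i j / β (P i j) = p₀)
    -- discretized gravitational source term
    (S : ℤ → ℤ → ℝ × ℝ × ℝ × ℝ)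
    (hS : ∀ i j, S i j =
      (0,
       p₀ * ρc i j / (ρ₀ * α (P i j)) *
         ((Y i j - Y i (j-1)) * β (Mx i j) - (Y (i-1) j - Y (i-1) (j-1)) * β (Mx (i-1) j)
          - ((Y i j - Y (i-1) j) * β (My i j) - (Y i (j-1) - Y (i-1) (j-1)) * β (My i (j-1)))),
       p₀ * ρc i j / (ρ₀ * α (P i j)) *
         (-((X i j - X i (j-1)) * β (Mx i j) - (X (i-1) j - X (i-1) (j-1)) * β (Mx (i-1) j))
          + ((X i j - X (i-1) j) * β (My i j) - (X i (j-1) - X (i-1) (j-1)) * β (My i (j-1)))),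
       0))
    -- the semi-discrete finite volume scheme
    (qdot : ℤ → ℤ → ℝ × ℝ × ℝ × ℝ)
    (hscheme : ∀ i j, (Ωc i j) • qdot i j =
      S i j -
        ((Ax i j) • Fhat (qxL i j) (qxR i j) (ℓ i j)
          - (Ax (i-1) j) • Fhat (qxL (i-1) j) (qxR (i-1) j) (ℓ (i-1) j)
          + (Ay i j) • Ghat (qyL i j) (qyR i j) (m i j)
          - (Ay i (j-1)) • Ghat (qyL i (j-1)) (qyR i (j-1)) (m i (j-1)))) :
    ∀ i j : ℤ,
      -- the flux terms exactly cancel the discretized source term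
      ((Ax i j) • Fhat (qxL i j) (qxR i j) (ℓ i j)
        - (Ax (i-1) j) • Fhat (qxL (i-1) j) (qxR (i-1) j) (ℓ (i-1) j)
        + (Ay i j) • Ghat (qyL i j) (qyR i j) (m i j)
        - (Ay i (j-1)) • Ghat (qyL i (j-1)) (qyR i (j-1)) (m i (j-1))) = S i j ∧
      -- hence the discrete hydrostatic state is preserved exactly
      qdot i j = 0 := by
  -- w is constant
  have hwc : w = fun _ _ => ((ρ₀, 0, 0, p₀) : GasState) := by
    funext i j
    rw [hw i j, hu i j, hv i j, hρ i j, hp i j]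
  set q0 : GasState := (ρ₀, 0, 0, p₀) with hq0
  -- face states
  have hqx : ∀ i j, qxL i j = (ρ₀ * α (Mx i j), 0, 0, p₀ * β (Mx i j)) ∧
      qxR i j = (ρ₀ * α (Mx i j), 0, 0, p₀ * β (Mx i j)) := by
    intro i j
    constructor
    · rw [hqxL i j, hwc, hRxL q0]
    · rw [hqxR i j, hwc, hRxR q0]
  have hqy : ∀ i j, qyL i j = (ρ₀ * α (My i j), 0, 0, p₀ * β (My i j)) ∧
      qyR i j = (ρ₀ * α (My i j), 0, 0, p₀ * β (My i j)) := by
    intro i j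
    constructor
    · rw [hqyL i j, hwc, hRyL q0]
    · rw [hqyR i j, hwc, hRyR q0]
  -- unit normals
  have hAx2 : ∀ i j, (Ax i j)^2 = (X i (j-1) - X i j)^2 + (Y i (j-1) - Y i j)^2 := by
    intro i j
    rw [hAx i j, Real.sq_sqrt (by positivity)]
  have hAy2 : ∀ i j, (Ay i j)^2 = (X i j - X (i-1) j)^2 + (Y i j - Y (i-1) j)^2 := by
    intro i j
    rw [hAy i j, Real.sq_sqrt (by positivity)]
  have hℓunit : ∀ i j, (ℓ i j).1^2 + (ℓ i j).2^2 = 1 := by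
    intro i j
    rw [hℓ i j]
    have h := hAx2 i j
    have h0 := hAx0 i j
    field_simp
    nlinarith [h]
  have hmunit : ∀ i j, (m i j).1^2 + (m i j).2^2 = 1 := by
    intro i j
    rw [hm i j]
    have h := hAy2 i j
    have h0 := hAy0 i j
    field_simp
    nlinarith [h]
  -- scaled fluxes
  have hF : ∀ i j, (Ax i j) • Fhat (qxL i j) (qxR i j) (ℓ i j) =
      ((0 : ℝ), p₀ * β (Mx i j) * (Y i j - Y i (j-1)),
        -(p₀ * β (Mx i j) * (X i j - X i (j-1))), 0) := by
    intro i j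
    rw [(hqx i j).1, (hqx i j).2, hFcons _ _ (hℓunit i j), hℓ i j]
    have h0 := hAx0 i j
    simp only [eulerFlux, Prod.smul_mk, smul_eq_mul]
    refine Prod.ext (by ring) (Prod.ext ?_ (Prod.ext ?_ (by ring))) <;>
      field_simp <;> ring
  have hG : ∀ i j, (Ay i j) • Ghat (qyL i j) (qyR i j) (m i j) =
      ((0 : ℝ), -(p₀ * β (My i j) * (Y i j - Y (i-1) j)),
        p₀ * β (My i j) * (X i j - X (i-1) j), 0) := by
    intro i j
    rw [(hqy i j).1, (hqy i j).2, hGcons _ _ (hmunit i j), hm i j]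
    have h0 := hAy0 i j
    simp only [eulerFlux, Prod.smul_mk, smul_eq_mul]
    refine Prod.ext (by ring) (Prod.ext ?_ (Prod.ext ?_ (by ring))) <;>
      field_simp <;> ring
  -- source prefactor
  have hpref : ∀ i j, p₀ * ρc i j / (ρ₀ * α (P i j)) = p₀ := by
    intro i j
    have hα0 : α (P i j) ≠ 0 := (hα _).ne'
    have : ρc i j = ρ₀ * α (P i j) := by
      have h := hρ i j
      rw [div_eq_iff hα0] at h
      linarith
    rw [this]
    field_simp
  intro i j
  have hcancel : ((Ax i j) • Fhat (qxL i j) (qxR i j) (ℓ i j)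
        - (Ax (i-1) j) • Fhat (qxL (i-1) j) (qxR (i-1) j) (ℓ (i-1) j)
        + (Ay i j) • Ghat (qyL i j) (qyR i j) (m i j)
        - (Ay i (j-1)) • Ghat (qyL i (j-1)) (qyR i (j-1)) (m i (j-1))) = S i j := by
    rw [hF i j, hF (i-1) j, hG i j, hG i (j-1), hS i j, hpref i j]
    refine Prod.ext (by simp) (Prod.ext ?_ (Prod.ext ?_ (by simp)))
    · simp only [Prod.fst_sub, Prod.fst_add, Prod.snd_sub, Prod.snd_add]
      ring
    · simp only [Prod.fst_sub, Prod.fst_add, Prod.snd_sub, Prod.snd_add]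
      ring
  refine ⟨hcancel, ?_⟩
  have h := hscheme i j
  rw [hcancel, sub_self] at h
  have hΩ0 : Ωc i j ≠ 0 := (hΩc i j).ne'
  rcases smul_eq_zero.mp h with h' | h'
  · exact absurd h' hΩ0
  · exact h'
end

section
/- Let φ, α, β : ℝ² → ℝ be differentiable with α, β > 0, let ρ₀, p₀ > 0 be constants, and assume the hydrostatic relation p₀ ∇β = −ρ₀ α ∇φ holds (i.e., p̄ = p₀β and ρ̄ = ρ₀α satisfy the hydrostatic equation). Let (ξ,η) ↦ (x(ξ,η), y(ξ,η)) be a twice continuously differentiable map with Jacobian J = x_ξ y_η − x_η y_ξ ≠ 0. Then for any function ρ of (ξ,η), composing φ, α, β with the map, the gravitational source terms can be rewritten in divergence-like form: −J ρ (∂φ/∂x) = (p₀ ρ/(ρ₀ α)) [ ∂_ξ(β y_η) − ∂_η(β y_ξ) ] and −J ρ (∂φ/∂y) = (p₀ ρ/(ρ₀ α)) [ −∂_ξ(β x_η) + ∂_η(β x_ξ) ]. -/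
/-- Partial derivative of `f : ℝ² → ℝ` with respect to the first coordinate. -/
noncomputable def pd1 (f : ℝ × ℝ → ℝ) (z : ℝ × ℝ) : ℝ := fderiv ℝ f z (1, 0)

/-- Partial derivative of `f : ℝ² → ℝ` with respect to the second coordinate. -/
noncomputable def pd2 (f : ℝ × ℝ → ℝ) (z : ℝ × ℝ) : ℝ := fderiv ℝ f z (0, 1)

-- apply of fderiv on general vector
lemma apply_split (f : ℝ × ℝ → ℝ) (p : ℝ × ℝ) (a b : ℝ) :
    fderiv ℝ f p (a, b) = a * pd1 f p + b * pd2 f p := by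
  have h : (a, b) = a • ((1:ℝ), (0:ℝ)) + b • ((0:ℝ), (1:ℝ)) := by simp
  rw [h, map_add, map_smul, map_smul]
  simp [pd1, pd2]

-- chain rule
lemma chain1 (β x y : ℝ × ℝ → ℝ) (hβ : Differentiable ℝ β)
    (hx : Differentiable ℝ x) (hy : Differentiable ℝ y) (z : ℝ × ℝ) :
    pd1 (fun w => β (x w, y w)) z
      = pd1 β (x z, y z) * pd1 x z + pd2 β (x z, y z) * pd1 y z := by
  have hm : HasFDerivAt (fun w => (x w, y w))
      (((fderiv ℝ x z).prod (fderiv ℝ y z))) z :=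
    HasFDerivAt.prodMk ((hx z).hasFDerivAt) ((hy z).hasFDerivAt)
  have hc := (hβ (x z, y z)).hasFDerivAt.comp z hm
  have := hc.fderiv
  unfold pd1
  rw [show (fun w => β (x w, y w)) = β ∘ fun w => (x w, y w) from rfl, this]
  simp only [ContinuousLinearMap.coe_comp', Function.comp_apply,
    ContinuousLinearMap.prod_apply]
  rw [apply_split]
  simp only [pd1, pd2]
  ring

lemma chain2 (β x y : ℝ × ℝ → ℝ) (hβ : Differentiable ℝ β)
    (hx : Differentiable ℝ x) (hy : Differentiable ℝ y) (z : ℝ × ℝ) :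
    pd2 (fun w => β (x w, y w)) z
      = pd1 β (x z, y z) * pd2 x z + pd2 β (x z, y z) * pd2 y z := by
  have hm : HasFDerivAt (fun w => (x w, y w))
      (((fderiv ℝ x z).prod (fderiv ℝ y z))) z :=
    HasFDerivAt.prodMk ((hx z).hasFDerivAt) ((hy z).hasFDerivAt)
  have hc := (hβ (x z, y z)).hasFDerivAt.comp z hm
  have := hc.fderiv
  unfold pd2
  rw [show (fun w => β (x w, y w)) = β ∘ fun w => (x w, y w) from rfl, this]
  simp only [ContinuousLinearMap.coe_comp', Function.comp_apply,
    ContinuousLinearMap.prod_apply]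
  rw [apply_split]
  simp only [pd1, pd2]
  ring

-- differentiability of pd
lemma pd_diff (y : ℝ × ℝ → ℝ) (hy : ContDiff ℝ 2 y) (v : ℝ × ℝ) :
    Differentiable ℝ (fun w => fderiv ℝ y w v) := by
  have h1 : ContDiff ℝ 1 (fderiv ℝ y) := hy.fderiv_right (by norm_num)
  exact (h1.differentiable (by norm_num)).clm_apply (differentiable_const v)

-- product rule
lemma prod1 (f g : ℝ × ℝ → ℝ) (hf : DifferentiableAt ℝ f z) (hg : DifferentiableAt ℝ g z) :
    pd1 (fun w => f w * g w) z = pd1 f z * g z + f z * pd1 g z := by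
  unfold pd1
  rw [fderiv_fun_mul hf hg]
  simp only [ContinuousLinearMap.add_apply, ContinuousLinearMap.smul_apply, smul_eq_mul]
  ring

lemma prod2 (f g : ℝ × ℝ → ℝ) (hf : DifferentiableAt ℝ f z) (hg : DifferentiableAt ℝ g z) :
    pd2 (fun w => f w * g w) z = pd2 f z * g z + f z * pd2 g z := by
  unfold pd2
  rw [fderiv_fun_mul hf hg]
  simp only [ContinuousLinearMap.add_apply, ContinuousLinearMap.smul_apply, smul_eq_mul]
  ring

-- mixed partials
lemma mixed (y : ℝ × ℝ → ℝ) (hy : ContDiff ℝ 2 y) (z v w : ℝ × ℝ) :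
    fderiv ℝ (fun u => fderiv ℝ y u w) z v = fderiv ℝ (fun u => fderiv ℝ y u v) z w := by
  have h1 : ContDiff ℝ 1 (fderiv ℝ y) := hy.fderiv_right (by norm_num)
  have hd : DifferentiableAt ℝ (fderiv ℝ y) z := (h1.differentiable (by norm_num)) z
  have hdiff : Differentiable ℝ y := hy.differentiable (by norm_num)
  have hsymm := second_derivative_symmetric (f' := fderiv ℝ y)
    (fun u => (hdiff u).hasFDerivAt) hd.hasFDerivAt v w
  have e1 : fderiv ℝ (fun u => fderiv ℝ y u w) z v = fderiv ℝ (fderiv ℝ y) z v w := by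
    rw [fderiv_clm_apply hd (differentiableAt_const w)]
    simp
  have e2 : fderiv ℝ (fun u => fderiv ℝ y u v) z w = fderiv ℝ (fderiv ℝ y) z w v := by
    rw [fderiv_clm_apply hd (differentiableAt_const v)]
    simp
  rw [e1, e2, hsymm]

lemma pd1_diff (y : ℝ × ℝ → ℝ) (hy : ContDiff ℝ 2 y) : Differentiable ℝ (pd1 y) :=
  pd_diff y hy (1, 0)

lemma pd2_diff (y : ℝ × ℝ → ℝ) (hy : ContDiff ℝ 2 y) : Differentiable ℝ (pd2 y) :=
  pd_diff y hy (0, 1)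

lemma mixed' (y : ℝ × ℝ → ℝ) (hy : ContDiff ℝ 2 y) (z : ℝ × ℝ) :
    pd1 (pd2 y) z = pd2 (pd1 y) z := by
  unfold pd1 pd2
  exact mixed y hy z (1, 0) (0, 1)

/-- **Divergence form of the gravitational source terms.**
If `p̄ = p₀ β` and `ρ̄ = ρ₀ α` satisfy the hydrostatic relation `p₀ ∇β = -ρ₀ α ∇φ`, and
`(ξ,η) ↦ (x(ξ,η), y(ξ,η))` is a C² map with Jacobian `J = x_ξ y_η - x_η y_ξ ≠ 0`, then
for any function `ρ` of `(ξ,η)` the gravitational source terms admit the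
divergence-like form
`-J ρ φ_x = (p₀ ρ/(ρ₀ α)) [∂_ξ(β y_η) - ∂_η(β y_ξ)]` and
`-J ρ φ_y = (p₀ ρ/(ρ₀ α)) [-∂_ξ(β x_η) + ∂_η(β x_ξ)]`. -/
theorem source_term_divergence_form
    (φ α β : ℝ × ℝ → ℝ)
    (hφ : Differentiable ℝ φ) (hα : Differentiable ℝ α) (hβ : Differentiable ℝ β)
    (hαpos : ∀ z, 0 < α z) (hβpos : ∀ z, 0 < β z)
    (ρ₀ p₀ : ℝ) (hρ₀ : 0 < ρ₀) (hp₀ : 0 < p₀)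
    (hhs1 : ∀ z, p₀ * pd1 β z = -(ρ₀ * α z) * pd1 φ z)
    (hhs2 : ∀ z, p₀ * pd2 β z = -(ρ₀ * α z) * pd2 φ z)
    (x y : ℝ × ℝ → ℝ) (hx : ContDiff ℝ 2 x) (hy : ContDiff ℝ 2 y)
    (J : ℝ × ℝ → ℝ)
    (hJ : ∀ z, J z = pd1 x z * pd2 y z - pd2 x z * pd1 y z)
    (hJ0 : ∀ z, J z ≠ 0)
    (ρ : ℝ × ℝ → ℝ) :
    ∀ z : ℝ × ℝ,
      (-(J z) * ρ z * pd1 φ (x z, y z)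
        = p₀ * ρ z / (ρ₀ * α (x z, y z)) *
            (pd1 (fun w => β (x w, y w) * pd2 y w) z
              - pd2 (fun w => β (x w, y w) * pd1 y w) z)) ∧
      (-(J z) * ρ z * pd2 φ (x z, y z)
        = p₀ * ρ z / (ρ₀ * α (x z, y z)) *
            (-pd1 (fun w => β (x w, y w) * pd2 x w) z
              + pd2 (fun w => β (x w, y w) * pd1 x w) z)) := by
  intro z
  have hxd : Differentiable ℝ x := hx.differentiable (by norm_num)
  have hyd : Differentiable ℝ y := hy.differentiable (by norm_num)
  have hBd : Differentiable ℝ (fun w => β (x w, y w)) := hβ.comp (hxd.prodMk hyd)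
  have hne : ρ₀ * α (x z, y z) ≠ 0 := ne_of_gt (mul_pos hρ₀ (hαpos _))
  have hα0 : α (x z, y z) ≠ 0 := ne_of_gt (hαpos _)
  have h1 := hhs1 (x z, y z)
  have h2 := hhs2 (x z, y z)
  constructor
  · rw [prod1 _ _ (hBd z) ((pd2_diff y hy) z), prod2 _ _ (hBd z) ((pd1_diff y hy) z),
      chain1 β x y hβ hxd hyd z, chain2 β x y hβ hxd hyd z, mixed' y hy z, hJ z]
    field_simp
    linear_combination (ρ z * (pd2 x z * pd1 y z - pd1 x z * pd2 y z)) * h1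
  · rw [prod1 _ _ (hBd z) ((pd2_diff x hx) z), prod2 _ _ (hBd z) ((pd1_diff x hx) z),
      chain1 β x y hβ hxd hyd z, chain2 β x y hβ hxd hyd z, mixed' x hx z, hJ z]
    field_simp
    linear_combination (ρ z * (pd2 x z * pd1 y z - pd1 x z * pd2 y z)) * h2
end

section
/- Let Ψ : U → V, (ξ,η) ↦ (x(ξ,η), y(ξ,η)) be a twice continuously differentiable bijection between open subsets of ℝ² whose Jacobian J = x_ξ y_η − x_η y_ξ is nowhere zero, and let f, g : V → ℝ be differentiable. Then at every point, (∂f/∂x + ∂g/∂y) ∘ Ψ = (1/J) [ ∂_ξ( y_η (f∘Ψ) − x_η (g∘Ψ) ) + ∂_η( −y_ξ (f∘Ψ) + x_ξ (g∘Ψ) ) ]; i.e., the physical divergence of the flux pair (f,g) transforms into a divergence in the curvilinear coordinates with the metric-weighted fluxes. -/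
lemma fderiv_apply_pair (f : ℝ × ℝ → ℝ) (w : ℝ × ℝ) (v : ℝ × ℝ) :
    fderiv ℝ f w v = v.1 * pd1 f w + v.2 * pd2 f w := by
  have h : v = v.1 • ((1:ℝ), (0:ℝ)) + v.2 • ((0:ℝ), (1:ℝ)) := by
    simp [Prod.ext_iff]
  conv_lhs => rw [h]
  rw [map_add, map_smul, map_smul]
  simp [pd1, pd2, smul_eq_mul]

lemma fderiv_mul_apply' (a b : ℝ × ℝ → ℝ) (z v : ℝ × ℝ)
    (ha : DifferentiableAt ℝ a z) (hb : DifferentiableAt ℝ b z) :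
    fderiv ℝ (fun w => a w * b w) z v = fderiv ℝ a z v * b z + a z * fderiv ℝ b z v := by
  rw [fderiv_fun_mul ha hb]
  simp [smul_eq_mul]
  ring

lemma fderiv_comp_pair (x y f : ℝ × ℝ → ℝ) (z v : ℝ × ℝ)
    (hx : DifferentiableAt ℝ x z) (hy : DifferentiableAt ℝ y z)
    (hf : DifferentiableAt ℝ f (x z, y z)) :
    fderiv ℝ (fun w => f (x w, y w)) z v
      = fderiv ℝ x z v * pd1 f (x z, y z) + fderiv ℝ y z v * pd2 f (x z, y z) := by
  have h : HasFDerivAt (fun w => (x w, y w)) ((fderiv ℝ x z).prod (fderiv ℝ y z)) z :=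
    HasFDerivAt.prodMk hx.hasFDerivAt hy.hasFDerivAt
  have h2 := (HasFDerivAt.comp z hf.hasFDerivAt h).fderiv
  rw [show (fun w => f (x w, y w)) = f ∘ (fun w => (x w, y w)) from rfl, h2]
  rw [ContinuousLinearMap.comp_apply, ContinuousLinearMap.prod_apply]
  exact fderiv_apply_pair f (x z, y z) _

lemma fderiv_fderiv_apply (y : ℝ × ℝ → ℝ) (z : ℝ × ℝ)
    (hd : DifferentiableAt ℝ (fderiv ℝ y) z) (v w : ℝ × ℝ) :
    fderiv ℝ (fun u => fderiv ℝ y u w) z v = fderiv ℝ (fderiv ℝ y) z v w := by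
  have h : HasFDerivAt (fun u => fderiv ℝ y u w)
      ((ContinuousLinearMap.apply ℝ ℝ w).comp (fderiv ℝ (fderiv ℝ y) z)) z :=
    (ContinuousLinearMap.apply ℝ ℝ w).hasFDerivAt.comp z hd.hasFDerivAt
  rw [h.fderiv]
  rfl

/-- **Transformation of the divergence to curvilinear coordinates.**
Let `Ψ : U → V`, `(ξ,η) ↦ (x,y)`, be a C² bijection between open subsets of ℝ² with
nowhere vanishing Jacobian `J = x_ξ y_η - x_η y_ξ`, and let `f, g : V → ℝ` be
differentiable. Then at every point of `U`,
`(f_x + g_y) ∘ Ψ = (1/J) [∂_ξ(y_η (f∘Ψ) - x_η (g∘Ψ)) + ∂_η(-y_ξ (f∘Ψ) + x_ξ (g∘Ψ))]`. -/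
theorem divergence_transformation
    (U V : Set (ℝ × ℝ)) (hU : IsOpen U) (hV : IsOpen V)
    (x y : ℝ × ℝ → ℝ)
    (Ψ : ℝ × ℝ → ℝ × ℝ) (hΨ : ∀ z, Ψ z = (x z, y z))
    (hΨC2 : ContDiffOn ℝ 2 Ψ U)
    (hbij : Set.BijOn Ψ U V)
    (J : ℝ × ℝ → ℝ)
    (hJ : ∀ z, J z = pd1 x z * pd2 y z - pd2 x z * pd1 y z)
    (hJ0 : ∀ z ∈ U, J z ≠ 0)
    (f g : ℝ × ℝ → ℝ)
    (hf : DifferentiableOn ℝ f V) (hg : DifferentiableOn ℝ g V) :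
    ∀ z ∈ U,
      pd1 f (Ψ z) + pd2 g (Ψ z)
        = (1 / J z) *
            (pd1 (fun w => pd2 y w * f (Ψ w) - pd2 x w * g (Ψ w)) z
              + pd2 (fun w => -(pd1 y w) * f (Ψ w) + pd1 x w * g (Ψ w)) z) := by
  have hΨ' : Ψ = fun w => (x w, y w) := funext hΨ
  subst hΨ'
  intro z hz
  have hzU : U ∈ nhds z := hU.mem_nhds hz
  -- x and y are C² on U
  have hx2 : ContDiffAt ℝ 2 x z :=
    ((contDiff_fst.comp_contDiffOn hΨC2).contDiffAt hzU)
  have hy2 : ContDiffAt ℝ 2 y z :=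
    ((contDiff_snd.comp_contDiffOn hΨC2).contDiffAt hzU)
  have hxd : DifferentiableAt ℝ x z := hx2.differentiableAt two_ne_zero
  have hyd : DifferentiableAt ℝ y z := hy2.differentiableAt two_ne_zero
  -- derivatives of fderiv
  have hxd' : DifferentiableAt ℝ (fderiv ℝ x) z :=
    (hx2.fderiv_right (m := 1) le_rfl).differentiableAt one_ne_zero
  have hyd' : DifferentiableAt ℝ (fderiv ℝ y) z :=
    (hy2.fderiv_right (m := 1) le_rfl).differentiableAt one_ne_zero
  have hpd2y : DifferentiableAt ℝ (fun w => pd2 y w) z := by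
    exact
      ((ContinuousLinearMap.apply ℝ ℝ ((0:ℝ),(1:ℝ))).differentiableAt.comp z hyd')
  have hpd2x : DifferentiableAt ℝ (fun w => pd2 x w) z := by
    exact
      ((ContinuousLinearMap.apply ℝ ℝ ((0:ℝ),(1:ℝ))).differentiableAt.comp z hxd')
  have hpd1y : DifferentiableAt ℝ (fun w => pd1 y w) z := by
    exact
      ((ContinuousLinearMap.apply ℝ ℝ ((1:ℝ),(0:ℝ))).differentiableAt.comp z hyd')
  have hpd1x : DifferentiableAt ℝ (fun w => pd1 x w) z := by
    exact
      ((ContinuousLinearMap.apply ℝ ℝ ((1:ℝ),(0:ℝ))).differentiableAt.comp z hxd')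
  -- compositions
  have hΨzV : ((x z, y z) : ℝ × ℝ) ∈ V := hbij.mapsTo hz
  have hfd : DifferentiableAt ℝ f (x z, y z) := hf.differentiableAt (hV.mem_nhds hΨzV)
  have hgd : DifferentiableAt ℝ g (x z, y z) := hg.differentiableAt (hV.mem_nhds hΨzV)
  have hFd : DifferentiableAt ℝ (fun w => f (x w, y w)) z :=
    hfd.comp z (DifferentiableAt.prodMk hxd hyd)
  have hGd : DifferentiableAt ℝ (fun w => g (x w, y w)) z :=
    hgd.comp z (DifferentiableAt.prodMk hxd hyd)
  -- symmetry of second derivatives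
  have hsymx := hx2.isSymmSndFDerivAt (by simp)
  have hsymy := hy2.isSymmSndFDerivAt (by simp)
  have symx : pd1 (fun w => pd2 x w) z = pd2 (fun w => pd1 x w) z := by
    simp only [pd1, pd2]
    rw [fderiv_fderiv_apply x z hxd', fderiv_fderiv_apply x z hxd']
    exact hsymx _ _
  have symy : pd1 (fun w => pd2 y w) z = pd2 (fun w => pd1 y w) z := by
    simp only [pd1, pd2]
    rw [fderiv_fderiv_apply y z hyd', fderiv_fderiv_apply y z hyd']
    exact hsymy _ _
  -- expand the first term
  have e1 : pd1 (fun w => pd2 y w * f (x w, y w) - pd2 x w * g (x w, y w)) z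
      = (pd1 (fun w => pd2 y w) z * f (x z, y z) + pd2 y z * pd1 (fun w => f (x w, y w)) z)
        - (pd1 (fun w => pd2 x w) z * g (x z, y z) + pd2 x z * pd1 (fun w => g (x w, y w)) z) := by
    simp only [pd1]
    rw [fderiv_fun_sub (hpd2y.fun_mul hFd) (hpd2x.fun_mul hGd)]
    rw [ContinuousLinearMap.sub_apply,
      fderiv_mul_apply' _ _ _ _ hpd2y hFd, fderiv_mul_apply' _ _ _ _ hpd2x hGd]
  have e2 : pd2 (fun w => -(pd1 y w) * f (x w, y w) + pd1 x w * g (x w, y w)) z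
      = (-(pd2 (fun w => pd1 y w) z) * f (x z, y z) + -(pd1 y z) * pd2 (fun w => f (x w, y w)) z)
        + (pd2 (fun w => pd1 x w) z * g (x z, y z) + pd1 x z * pd2 (fun w => g (x w, y w)) z) := by
    simp only [pd2]
    rw [fderiv_fun_add (hpd1y.fun_neg.fun_mul hFd) (hpd1x.fun_mul hGd)]
    rw [ContinuousLinearMap.add_apply,
      fderiv_mul_apply' _ _ _ _ hpd1y.fun_neg hFd, fderiv_mul_apply' _ _ _ _ hpd1x hGd]
    rw [fderiv_fun_neg, ContinuousLinearMap.neg_apply]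
  -- chain rule
  have cF1 : pd1 (fun w => f (x w, y w)) z
      = pd1 x z * pd1 f (x z, y z) + pd1 y z * pd2 f (x z, y z) := by
    simpa [pd1] using fderiv_comp_pair x y f z (1,0) hxd hyd hfd
  have cF2 : pd2 (fun w => f (x w, y w)) z
      = pd2 x z * pd1 f (x z, y z) + pd2 y z * pd2 f (x z, y z) := by
    simpa [pd1, pd2] using fderiv_comp_pair x y f z (0,1) hxd hyd hfd
  have cG1 : pd1 (fun w => g (x w, y w)) z
      = pd1 x z * pd1 g (x z, y z) + pd1 y z * pd2 g (x z, y z) := by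
    simpa [pd1] using fderiv_comp_pair x y g z (1,0) hxd hyd hgd
  have cG2 : pd2 (fun w => g (x w, y w)) z
      = pd2 x z * pd1 g (x z, y z) + pd2 y z * pd2 g (x z, y z) := by
    simpa [pd1, pd2] using fderiv_comp_pair x y g z (0,1) hxd hyd hgd
  have hJz := hJ z
  have hJ0z := hJ0 z hz
  rw [e1, e2, symx, symy, cF1, cF2, cG1, cG2]
  field_simp
  rw [hJz]
  ring
end

section
/- Let ΔT ∈ (0,1) and μ > 0, and define T̄(x) = 1 + ΔT tanh(x/μ) and p̄(x) = exp( −( x − ΔT μ log( cosh(x/μ) + ΔT sinh(x/μ) ) ) / (1 − ΔT²) ), ρ̄(x) = p̄(x)/T̄(x). Then cosh(x/μ) + ΔT sinh(x/μ) > 0 and T̄(x) > 0 for all x ∈ ℝ, and (ρ̄, p̄) satisfies the one-dimensional hydrostatic equation p̄′(x) = −ρ̄(x) for the gravitational potential φ(x) = x; with the ideal gas equation of state p = ρT the temperature of this solution is exactly T̄. -/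
/-- Temperature profile of the tanh-test. -/
noncomputable def tanhT (ΔT μ x : ℝ) : ℝ := 1 + ΔT * Real.tanh (x / μ)

/-- Pressure profile of the tanh-test. -/
noncomputable def tanhP (ΔT μ x : ℝ) : ℝ :=
  Real.exp (-(x - ΔT * μ * Real.log (Real.cosh (x / μ) + ΔT * Real.sinh (x / μ)))
    / (1 - ΔT ^ 2))

/-- Density profile of the tanh-test (ideal gas: `ρ̄ = p̄ / T̄`). -/
noncomputable def tanhRho (ΔT μ x : ℝ) : ℝ := tanhP ΔT μ x / tanhT ΔT μ x

/-- **The tanh-profile hydrostatic solution.**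
For `ΔT ∈ (0,1)` and `μ > 0`, the quantities `cosh(x/μ) + ΔT sinh(x/μ)` and
`T̄(x) = 1 + ΔT tanh(x/μ)` are positive for all `x`, the pair `(ρ̄, p̄)` satisfies the
one-dimensional hydrostatic equation `p̄′(x) = -ρ̄(x)` for the potential `φ(x) = x`, and
under the ideal gas EoS `p = ρ T` the temperature of the solution is exactly `T̄`. -/
theorem tanh_profile_hydrostatic (ΔT μ : ℝ) (hΔT0 : 0 < ΔT) (hΔT1 : ΔT < 1) (hμ : 0 < μ) :
    ∀ x : ℝ,
      0 < Real.cosh (x / μ) + ΔT * Real.sinh (x / μ) ∧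
      0 < tanhT ΔT μ x ∧
      deriv (tanhP ΔT μ) x = -tanhRho ΔT μ x ∧
      tanhP ΔT μ x = tanhRho ΔT μ x * tanhT ΔT μ x := by
  intro x
  have hμ' : μ ≠ 0 := hμ.ne'
  have hc : 0 < Real.cosh (x / μ) := Real.cosh_pos _
  have hsq : Real.cosh (x / μ) ^ 2 = Real.sinh (x / μ) ^ 2 + 1 := by
    have := Real.cosh_sq (x / μ); linarith
  have hg : 0 < Real.cosh (x / μ) + ΔT * Real.sinh (x / μ) := by
    nlinarith [sq_nonneg (Real.cosh (x / μ) + Real.sinh (x / μ)),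
      sq_nonneg (Real.cosh (x / μ) - Real.sinh (x / μ)), sq_nonneg ΔT]
  have htanh : Real.tanh (x / μ) = Real.sinh (x / μ) / Real.cosh (x / μ) :=
    Real.tanh_eq_sinh_div_cosh _
  have hT : 0 < tanhT ΔT μ x := by
    unfold tanhT
    rw [htanh]
    have : 1 + ΔT * (Real.sinh (x / μ) / Real.cosh (x / μ)) =
        (Real.cosh (x / μ) + ΔT * Real.sinh (x / μ)) / Real.cosh (x / μ) := by
      field_simp
    rw [this]
    positivity
  refine ⟨hg, hT, ?_, ?_⟩
  · -- derivative
    have hd1 : HasDerivAt (fun y : ℝ => y / μ) (1 / μ) x := (hasDerivAt_id x).div_const μ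
    have hdg : HasDerivAt (fun y : ℝ => Real.cosh (y / μ) + ΔT * Real.sinh (y / μ))
        (Real.sinh (x / μ) * (1 / μ) + ΔT * (Real.cosh (x / μ) * (1 / μ))) x := by
      exact ((Real.hasDerivAt_cosh _).comp x hd1).add
        (((Real.hasDerivAt_sinh _).comp x hd1).const_mul ΔT)
    have hlog : HasDerivAt (fun y : ℝ => Real.log (Real.cosh (y / μ) + ΔT * Real.sinh (y / μ)))
        ((Real.sinh (x / μ) * (1 / μ) + ΔT * (Real.cosh (x / μ) * (1 / μ))) /
          (Real.cosh (x / μ) + ΔT * Real.sinh (x / μ))) x := hdg.log hg.ne'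
    have hinner : HasDerivAt (fun y : ℝ =>
        -(y - ΔT * μ * Real.log (Real.cosh (y / μ) + ΔT * Real.sinh (y / μ))) / (1 - ΔT ^ 2))
        (-(1 - ΔT * μ * ((Real.sinh (x / μ) * (1 / μ) + ΔT * (Real.cosh (x / μ) * (1 / μ))) /
          (Real.cosh (x / μ) + ΔT * Real.sinh (x / μ)))) / (1 - ΔT ^ 2)) x := by
      exact (((hasDerivAt_id x).sub (hlog.const_mul (ΔT * μ))).neg).div_const _
    have hP : HasDerivAt (tanhP ΔT μ)
        (Real.exp (-(x - ΔT * μ * Real.log (Real.cosh (x / μ) + ΔT * Real.sinh (x / μ)))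
          / (1 - ΔT ^ 2)) *
        (-(1 - ΔT * μ * ((Real.sinh (x / μ) * (1 / μ) + ΔT * (Real.cosh (x / μ) * (1 / μ))) /
          (Real.cosh (x / μ) + ΔT * Real.sinh (x / μ)))) / (1 - ΔT ^ 2))) x := hinner.exp
    rw [hP.deriv]
    unfold tanhRho tanhT tanhP
    rw [htanh]
    have h1 : (1 : ℝ) - ΔT ^ 2 ≠ 0 := by nlinarith
    have hT' : 1 + ΔT * (Real.sinh (x / μ) / Real.cosh (x / μ)) ≠ 0 := by
      rw [← htanh]
      exact ne_of_gt (by simpa [tanhT] using hT)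
    have key : -(1 - ΔT * μ * ((Real.sinh (x / μ) * (1 / μ) + ΔT * (Real.cosh (x / μ) * (1 / μ))) /
          (Real.cosh (x / μ) + ΔT * Real.sinh (x / μ)))) / (1 - ΔT ^ 2)
        = -(1 / (1 + ΔT * (Real.sinh (x / μ) / Real.cosh (x / μ)))) := by
      field_simp
      ring
    rw [key]
    ring
  · unfold tanhRho
    rw [div_mul_cancel₀ _ hT.ne']
end

section
/- Let γ > 1 and u₀, v₀, p₀ ∈ ℝ, and define on ℝ × ℝ²: ρ(t,x,y) = 1 + (1/5) sin(π(x + y − t(u₀+v₀))), u ≡ u₀, v ≡ v₀, p(t,x,y) = p₀ + t(u₀+v₀) − x − y + (1/(5π)) cos(π(x + y − t(u₀+v₀))), with gravitational potential φ(x,y) = x + y and total energy E = p/(γ−1) + (1/2)ρ(u² + v²) + ρφ. Then these fields satisfy the two-dimensional compressible Euler equations with gravitational source term for all (t,x,y): ∂ρ/∂t + ∂(ρu)/∂x + ∂(ρv)/∂y = 0, ∂(ρu)/∂t + ∂(p + ρu²)/∂x + ∂(ρuv)/∂y = −ρ ∂φ/∂x, ∂(ρv)/∂t + ∂(ρuv)/∂x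 + ∂(p + ρv²)/∂y = −ρ ∂φ/∂y, and ∂E/∂t + ∂((E+p)u)/∂x + ∂((E+p)v)/∂y = 0. -/
open Real

set_option maxHeartbeats 1000000 in
/-- **Exact solution of the 2D compressible Euler equations with gravity.**
For `γ > 1` and constants `u₀, v₀, p₀`, the fields
`ρ = 1 + (1/5) sin(π(x+y-t(u₀+v₀)))`, `u ≡ u₀`, `v ≡ v₀`,
`p = p₀ + t(u₀+v₀) - x - y + (1/(5π)) cos(π(x+y-t(u₀+v₀)))`,
with potential `φ = x + y` and total energy `E = p/(γ-1) + (1/2)ρ(u²+v²) + ρφ`,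
satisfy the mass, momentum and energy balance laws with gravitational source term. -/
theorem exact_solution_euler_gravity (γ u₀ v₀ p₀ : ℝ) (hγ : 1 < γ) :
    let ρ : ℝ × ℝ × ℝ → ℝ := fun z =>
      1 + (1 / 5) * Real.sin (π * (z.2.1 + z.2.2 - z.1 * (u₀ + v₀)))
    let p : ℝ × ℝ × ℝ → ℝ := fun z =>
      p₀ + z.1 * (u₀ + v₀) - z.2.1 - z.2.2
        + (1 / (5 * π)) * Real.cos (π * (z.2.1 + z.2.2 - z.1 * (u₀ + v₀)))
    let φ : ℝ × ℝ × ℝ → ℝ := fun z => z.2.1 + z.2.2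
    let Etot : ℝ × ℝ × ℝ → ℝ := fun z =>
      p z / (γ - 1) + (1 / 2) * ρ z * (u₀ ^ 2 + v₀ ^ 2) + ρ z * φ z
    let et : ℝ × ℝ × ℝ := (1, 0, 0)
    let ex : ℝ × ℝ × ℝ := (0, 1, 0)
    let ey : ℝ × ℝ × ℝ := (0, 0, 1)
    ∀ z : ℝ × ℝ × ℝ,
      -- mass conservation
      fderiv ℝ ρ z et + fderiv ℝ (fun w => ρ w * u₀) z ex
        + fderiv ℝ (fun w => ρ w * v₀) z ey = 0 ∧
      -- x-momentum balance
      fderiv ℝ (fun w => ρ w * u₀) z et + fderiv ℝ (fun w => p w + ρ w * u₀ ^ 2) z ex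
        + fderiv ℝ (fun w => ρ w * u₀ * v₀) z ey = -(ρ z) * fderiv ℝ φ z ex ∧
      -- y-momentum balance
      fderiv ℝ (fun w => ρ w * v₀) z et + fderiv ℝ (fun w => ρ w * u₀ * v₀) z ex
        + fderiv ℝ (fun w => p w + ρ w * v₀ ^ 2) z ey = -(ρ z) * fderiv ℝ φ z ey ∧
      -- energy conservation
      fderiv ℝ Etot z et + fderiv ℝ (fun w => (Etot w + p w) * u₀) z ex
        + fderiv ℝ (fun w => (Etot w + p w) * v₀) z ey = 0 := by

  intro ρ p φ Etot et ex ey z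
  have hπ : (π:ℝ) ≠ 0 := Real.pi_ne_zero
  have hγ1 : γ - 1 ≠ 0 := sub_ne_zero.mpr (ne_of_gt hγ)
  have ht : HasFDerivAt (fun w : ℝ × ℝ × ℝ => w.1)
      (ContinuousLinearMap.fst ℝ ℝ (ℝ × ℝ)) z := hasFDerivAt_fst
  have hsnd : HasFDerivAt (fun w : ℝ × ℝ × ℝ => w.2)
      (ContinuousLinearMap.snd ℝ ℝ (ℝ × ℝ)) z := hasFDerivAt_snd
  have hx := hsnd.fst
  have hy := hsnd.snd
  have hs := ((hx.add hy).sub (ht.mul_const (u₀ + v₀))).const_mul π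
  have hsin := (Real.hasDerivAt_sin
    (π * (z.2.1 + z.2.2 - z.1 * (u₀ + v₀)))).comp_hasFDerivAt z hs
  have hcos := (Real.hasDerivAt_cos
    (π * (z.2.1 + z.2.2 - z.1 * (u₀ + v₀)))).comp_hasFDerivAt z hs
  have hρ : HasFDerivAt ρ _ z := (hsin.const_mul (1/5 : ℝ)).const_add 1
  have hp : HasFDerivAt p _ z :=
    ((((ht.mul_const (u₀ + v₀)).const_add p₀).sub hx).sub hy).add
      (hcos.const_mul (1/(5*π) : ℝ))
  have hφ : HasFDerivAt φ _ z := hx.add hy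
  have hE : HasFDerivAt Etot _ z :=
    ((hp.mul_const (γ-1)⁻¹).add ((hρ.const_mul (1/2 : ℝ)).mul_const (u₀^2 + v₀^2))).add
      (hρ.mul hφ)
  have het : et = ((1:ℝ), (0:ℝ), (0:ℝ)) := rfl
  have hex : ex = ((0:ℝ), (1:ℝ), (0:ℝ)) := rfl
  have hey : ey = ((0:ℝ), (0:ℝ), (1:ℝ)) := rfl
  have hρz : ρ z = 1 + (1/5) * Real.sin (π * (z.2.1 + z.2.2 - z.1 * (u₀ + v₀))) := rfl
  refine ⟨?_, ?_, ?_, ?_⟩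
  · rw [hρ.fderiv, (hρ.mul_const u₀).fderiv, (hρ.mul_const v₀).fderiv, het, hex, hey]
    simp only [ContinuousLinearMap.add_apply, ContinuousLinearMap.sub_apply,
      ContinuousLinearMap.smul_apply, ContinuousLinearMap.comp_apply,
      ContinuousLinearMap.coe_fst', ContinuousLinearMap.coe_snd',
      ContinuousLinearMap.smulRight_apply, ContinuousLinearMap.coe_smul',
      Pi.smul_apply, smul_eq_mul]
    ring
  · rw [(hρ.mul_const u₀).fderiv, (show HasFDerivAt (fun w => p w + ρ w * u₀ ^ 2) _ z from hp.add (hρ.mul_const (u₀^2))).fderiv,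
      ((hρ.mul_const u₀).mul_const v₀).fderiv, hφ.fderiv, het, hex, hey, hρz]
    simp only [ContinuousLinearMap.add_apply, ContinuousLinearMap.sub_apply,
      ContinuousLinearMap.smul_apply, ContinuousLinearMap.comp_apply,
      ContinuousLinearMap.coe_fst', ContinuousLinearMap.coe_snd',
      ContinuousLinearMap.smulRight_apply, ContinuousLinearMap.coe_smul',
      Pi.smul_apply, smul_eq_mul]
    field_simp
    ring
  · rw [(hρ.mul_const v₀).fderiv, ((hρ.mul_const u₀).mul_const v₀).fderiv,
      (show HasFDerivAt (fun w => p w + ρ w * v₀ ^ 2) _ z from hp.add (hρ.mul_const (v₀^2))).fderiv, hφ.fderiv, het, hex, hey, hρz]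
    simp only [ContinuousLinearMap.add_apply, ContinuousLinearMap.sub_apply,
      ContinuousLinearMap.smul_apply, ContinuousLinearMap.comp_apply,
      ContinuousLinearMap.coe_fst', ContinuousLinearMap.coe_snd',
      ContinuousLinearMap.smulRight_apply, ContinuousLinearMap.coe_smul',
      Pi.smul_apply, smul_eq_mul]
    field_simp
    ring
  · rw [hE.fderiv, (show HasFDerivAt (fun w => (Etot w + p w) * u₀) _ z from (hE.add hp).mul_const u₀).fderiv,
      (show HasFDerivAt (fun w => (Etot w + p w) * v₀) _ z from (hE.add hp).mul_const v₀).fderiv,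
      het, hex, hey, hρz]
    simp only [ContinuousLinearMap.add_apply, ContinuousLinearMap.sub_apply,
      ContinuousLinearMap.smul_apply, ContinuousLinearMap.comp_apply,
      ContinuousLinearMap.coe_fst', ContinuousLinearMap.coe_snd',
      ContinuousLinearMap.smulRight_apply, ContinuousLinearMap.coe_smul',
      Pi.smul_apply, smul_eq_mul]
    field_simp [hπ, hγ1]
    ring
end

section
/- Let γ > 1 and let φ : Ω → ℝ (Ω ⊆ ℝ) be differentiable. Consider the isothermal stratification for the ideal gas with radiation pressure equation of state: ρ̄(χ) = exp(−φ(χ)), p̄(χ) = exp(−φ(χ)) + 1, T̄ ≡ 1. Then ∇_ext = 0 wherever φ′(χ) ≠ 0, the denominator in the adiabatic gradient formula is positive (writing E = exp(−φ(χ)), one has 32p̄² − 24p̄ρ̄T̄ − 3ρ̄²T̄² = 5E² + 40E + 32 > 0), the adiabatic temperature gradient ∇_ad = 2p̄(4p̄ − 3ρ̄T̄)/(32p̄² − 24p̄ρ̄T̄ − 3ρ̄²T̄²) = 2(E+1)(E+4)/(5E² + 40E + 32) is positive, and hence the Brunt–Väisälä frequency satisfies N(χ)² = φ′(χ)² (ρ̄/p̄)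 ∇_ad > 0 at every χ with φ′(χ) ≠ 0; in particular the stratification is stable with respect to convection. -/
/-- **Convective stability of the isothermal stratification for the ideal gas with
radiation pressure.**
For `γ > 1` and a differentiable potential `φ`, the stratification
`ρ̄ = exp(-φ)`, `p̄ = exp(-φ) + 1`, `T̄ ≡ 1` has `∇_ext = 0` wherever `φ′ ≠ 0`; writing
`E = exp(-φ(χ))`, the denominator of the adiabatic gradient formula equals
`5E² + 40E + 32 > 0`, the adiabatic gradient is
`∇_ad = 2p̄(4p̄ - 3ρ̄T̄)/(32p̄² - 24p̄ρ̄T̄ - 3ρ̄²T̄²) = 2(E+1)(E+4)/(5E² + 40E + 32) > 0`,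
and the Brunt–Väisälä frequency satisfies `N² = φ′² (ρ̄/p̄) ∇_ad > 0` wherever
`φ′ ≠ 0`; in particular `N² ≥ 0` on the whole domain, i.e., the stratification is
stable with respect to convection. -/
theorem radiation_isothermal_stability (γ : ℝ) (hγ : 1 < γ) (Ω : Set ℝ)
    (φ : ℝ → ℝ) (hφ : Differentiable ℝ φ) :
    ∀ χ ∈ Ω,
      (let ρ : ℝ → ℝ := fun χ => Real.exp (-φ χ)
       let p : ℝ → ℝ := fun χ => Real.exp (-φ χ) + 1
       let T : ℝ → ℝ := fun _ => 1
       let Ev : ℝ := Real.exp (-φ χ)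
       let nablaExt : ℝ := p χ * deriv T χ / (T χ * deriv p χ)
       let denom : ℝ := 32 * p χ ^ 2 - 24 * p χ * ρ χ * T χ - 3 * ρ χ ^ 2 * T χ ^ 2
       let nablaAd : ℝ := 2 * p χ * (4 * p χ - 3 * ρ χ * T χ) / denom
       let Hp : ℝ := p χ / (ρ χ * deriv φ χ)
       let Nsq : ℝ := deriv φ χ / Hp * (nablaAd - nablaExt)
       (deriv φ χ ≠ 0 → nablaExt = 0) ∧
       denom = 5 * Ev ^ 2 + 40 * Ev + 32 ∧
       0 < denom ∧
       nablaAd = 2 * (Ev + 1) * (Ev + 4) / (5 * Ev ^ 2 + 40 * Ev + 32) ∧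
       0 < nablaAd ∧
       (deriv φ χ ≠ 0 → Nsq = (deriv φ χ) ^ 2 * (ρ χ / p χ) * nablaAd ∧ 0 < Nsq) ∧
       0 ≤ Nsq) := by
  intro χ _
  have hE : 0 < Real.exp (-φ χ) := Real.exp_pos _
  set E := Real.exp (-φ χ) with hEdef
  have hT : deriv (fun _ : ℝ => (1:ℝ)) χ = 0 := deriv_const _ _
  simp only []
  have hExt : ((E + 1) * deriv (fun _ : ℝ => (1:ℝ)) χ / ((1:ℝ) * deriv (fun χ => Real.exp (-φ χ) + 1) χ)) = 0 := by
    rw [hT]; ring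
  have hdenom : 32 * (E + 1) ^ 2 - 24 * (E + 1) * E * 1 - 3 * E ^ 2 * 1 ^ 2
      = 5 * E ^ 2 + 40 * E + 32 := by ring
  have hdpos : 0 < 5 * E ^ 2 + 40 * E + 32 := by positivity
  have hAd : 2 * (E + 1) * (4 * (E + 1) - 3 * E * 1) /
      (32 * (E + 1) ^ 2 - 24 * (E + 1) * E * 1 - 3 * E ^ 2 * 1 ^ 2)
      = 2 * (E + 1) * (E + 4) / (5 * E ^ 2 + 40 * E + 32) := by
    rw [hdenom]; ring_nf
  have hAdpos : 0 < 2 * (E + 1) * (E + 4) / (5 * E ^ 2 + 40 * E + 32) := by positivity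
  refine ⟨fun _ => hExt, hdenom, hdenom ▸ hdpos, hAd, hAd ▸ hAdpos, ?_, ?_⟩
  · intro hd
    have hp1 : E + 1 ≠ 0 := by positivity
    have key : deriv φ χ / ((E + 1) / (E * deriv φ χ)) *
        (2 * (E + 1) * (4 * (E + 1) - 3 * E * 1) /
          (32 * (E + 1) ^ 2 - 24 * (E + 1) * E * 1 - 3 * E ^ 2 * 1 ^ 2) -
          (E + 1) * deriv (fun _ : ℝ => (1:ℝ)) χ / ((1:ℝ) * deriv (fun χ => Real.exp (-φ χ) + 1) χ))
        = (deriv φ χ) ^ 2 * (E / (E + 1)) *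
          (2 * (E + 1) * (4 * (E + 1) - 3 * E * 1) /
            (32 * (E + 1) ^ 2 - 24 * (E + 1) * E * 1 - 3 * E ^ 2 * 1 ^ 2)) := by
      rw [hT, hdenom]
      field_simp
      ring_nf
      try exact Or.inl trivial
    refine ⟨key, ?_⟩
    rw [key, hAd]
    have : 0 < (deriv φ χ) ^ 2 := by positivity
    positivity
  · rcases eq_or_ne (deriv φ χ) 0 with h | h
    · rw [hT, h]
      simp
    · rw [hT, hdenom]
      have hp1 : E + 1 ≠ 0 := by positivity
      have key : deriv φ χ / ((E + 1) / (E * deriv φ χ)) *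
          (2 * (E + 1) * (4 * (E + 1) - 3 * E * 1) / (5 * E ^ 2 + 40 * E + 32) -
            (E + 1) * 0 / (1 * deriv (fun χ => Real.exp (-φ χ) + 1) χ))
          = (deriv φ χ) ^ 2 * (E / (E + 1)) *
            (2 * (E + 1) * (4 * (E + 1) - 3 * E * 1) / (5 * E ^ 2 + 40 * E + 32)) := by
        field_simp
        ring_nf
        try exact Or.inl trivial
      rw [key]
      have hq : 4 * (E + 1) - 3 * E * 1 = E + 4 := by ring
      rw [hq]
      positivity
end
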